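/- Let β ∈ ℂ, N ≥ 1, L ≥ 0, and let z₁,…,z_N and w₁,…,w_N be complex numbers such that the z_j are pairwise distinct, the w_j are pairwise distinct, and z_j ≠ w_k for all j,k. Then the Cauchy identity for Grothendieck polynomials holds: Σ_{λ ⊆ L^N} G_λ(z;β) G_{λ∨}(w;β) = ∏_{1≤j<k≤N} [ (z_j−z_k)(w_k−w_j) ]⁻¹ · det_{1≤j,k≤N} [ ( z_j^{L+N}(1+βw_k)^{N−1} − w_k^{L+N}(1+βz_j)^{N−1} ) / (z_j − w_k) ], where the sum runs over all partitions λ = (λ₁,…,λ_N) with L ≥ λ₁ ≥ ⋯ ≥ λ_N ≥ 0, and λ∨_j = L − λ_{N+1−j}. -/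

import Mathlib

noncomputable section

open Matrix Finset

namespace CauchyAux

/-- The Cauchy kernel matrix. -/
def Cmat (β : ℂ) (N m : ℕ) (z w : Fin N → ℂ) : Matrix (Fin N) (Fin N) ℂ :=
  Matrix.of fun j k =>
    (z j ^ m * (1 + β * w k) ^ (N - 1) - w k ^ m * (1 + β * z j) ^ (N - 1)) / (z j - w k)

/-- The `z`-side determinant matrix. -/
def Dmat (β : ℂ) (N m : ℕ) (a : Fin N → Fin m) (z : Fin N → ℂ) : Matrix (Fin N) (Fin N) ℂ :=
  Matrix.of fun j k => z j ^ (a k : ℕ) * (1 + β * z j) ^ (k : ℕ)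

/-- The `w`-side determinant matrix. -/
def Emat (β : ℂ) (N m : ℕ) (a : Fin N → Fin m) (w : Fin N → ℂ) : Matrix (Fin N) (Fin N) ℂ :=
  Matrix.of fun j k => w j ^ (m - 1 - (a k : ℕ)) * (1 + β * w j) ^ (N - 1 - (k : ℕ))

/-- Strictly decreasing tuples. -/
def SA (N m : ℕ) : Finset (Fin N → Fin m) :=
  Finset.univ.filter (fun a => ∀ j k : Fin N, j < k → a k < a j)

/-- The Cauchy sum. -/
def Tsum (β : ℂ) (N m : ℕ) (z w : Fin N → ℂ) : ℂ :=
  ∑ a ∈ SA N m, (Dmat β N m a z).det * (Emat β N m a w).det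

/-- Bordered matrix. -/
def brd {n : ℕ} (A : Matrix (Fin n) (Fin n) ℂ) (c r : Fin n → ℂ) (κ : ℂ) :
    Matrix (Fin (n + 1)) (Fin (n + 1)) ℂ :=
  Matrix.of fun i j =>
    Fin.lastCases (Fin.lastCases κ (fun j' => r j') j)
      (fun i' => Fin.lastCases (c i') (fun j' => A i' j') j) i

@[simp] lemma brd_cc {n : ℕ} (A : Matrix (Fin n) (Fin n) ℂ) (c r : Fin n → ℂ) (κ : ℂ)
    (i j : Fin n) : brd A c r κ i.castSucc j.castSucc = A i j := by
  simp [brd]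

@[simp] lemma brd_cl {n : ℕ} (A : Matrix (Fin n) (Fin n) ℂ) (c r : Fin n → ℂ) (κ : ℂ)
    (i : Fin n) : brd A c r κ i.castSucc (Fin.last n) = c i := by
  simp [brd]

@[simp] lemma brd_lc {n : ℕ} (A : Matrix (Fin n) (Fin n) ℂ) (c r : Fin n → ℂ) (κ : ℂ)
    (j : Fin n) : brd A c r κ (Fin.last n) j.castSucc = r j := by
  simp [brd]

@[simp] lemma brd_ll {n : ℕ} (A : Matrix (Fin n) (Fin n) ℂ) (c r : Fin n → ℂ) (κ : ℂ) :
    brd A c r κ (Fin.last n) (Fin.last n) = κ := by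
  simp [brd]

/-- Column operations: subtracting multiples of a fixed column. -/
lemma det_eq_of_forall_col_eq_smul_add_const {n : Type*} [DecidableEq n] [Fintype n]
    {A B : Matrix n n ℂ} (c : n → ℂ) (k : n) (hk : c k = 0)
    (h : ∀ i j, A i j = B i j + c j * B i k) : A.det = B.det := by
  rw [← Matrix.det_transpose A, ← Matrix.det_transpose B]
  exact Matrix.det_eq_of_forall_row_eq_smul_add_const c k hk (fun i j => h j i)

/-- determinant of a bordered matrix with `e_last` bottom row. -/
lemma det_brd_unit {n : ℕ} (A : Matrix (Fin n) (Fin n) ℂ) (c : Fin n → ℂ) :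
    (brd A c 0 1).det = A.det := by
  rw [Matrix.det_succ_row _ (Fin.last n), Fin.sum_univ_castSucc]
  have hz : ∀ j' : Fin n,
      (-1 : ℂ) ^ ((Fin.last n : ℕ) + ((j'.castSucc : Fin (n+1)) : ℕ))
        * brd A c 0 1 (Fin.last n) j'.castSucc
        * ((brd A c 0 1).submatrix (Fin.last n).succAbove j'.castSucc.succAbove).det = 0 := by
    intro j'
    rw [brd_lc]
    simp
  rw [Finset.sum_congr rfl (fun j' _ => hz j'), Finset.sum_const, smul_zero, zero_add]
  rw [brd_ll]
  have hsub : (brd A c 0 1).submatrix (Fin.last n).succAbove (Fin.last n).succAbove = A := by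
    ext i j
    simp [Fin.succAbove_last]
  rw [hsub]
  have : ((-1 : ℂ)) ^ ((Fin.last n : ℕ) + (Fin.last n : ℕ)) = 1 :=
    Even.neg_one_pow ⟨(Fin.last n : ℕ), rfl⟩
  rw [this, one_mul, one_mul]

/-- Key rank-one update determinant identity. -/
lemma det_add_col_mul_row {n : ℕ} (A : Matrix (Fin n) (Fin n) ℂ) (c r : Fin n → ℂ) :
    (Matrix.of fun j k => A j k + c j * r k).det = A.det - (brd A c r 0).det := by
  set M : Matrix (Fin n) (Fin n) ℂ := Matrix.of fun j k => A j k + c j * r k with hM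
  set cc : Fin (n+1) → ℂ := fun j => Fin.lastCases 0 r j with hcc
  have hcclast : cc (Fin.last n) = 0 := by simp [hcc]
  have hcccast : ∀ k : Fin n, cc k.castSucc = r k := by intro k; simp [hcc]
  -- step alpha : det (brd M c r 1) = det (brd A c 0 1)
  have ha : (brd M c r 1).det = (brd A c 0 1).det := by
    apply det_eq_of_forall_col_eq_smul_add_const cc (Fin.last n) hcclast
    intro i j
    induction i using Fin.lastCases with
    | last =>
      induction j using Fin.lastCases with
      | last => simp [hcclast]
      | cast j' => simp [hcccast]
    | cast i' =>
      induction j using Fin.lastCases with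
      | last => simp [hcclast]
      | cast j' => simp [hcccast, hM, mul_comm]
  -- step beta : det (brd M c r 1) = det (brd M c r 0) + det M
  have hb : (brd M c r 1).det = (brd M c r 0).det + M.det := by
    have h1 : brd M c r 1 = (brd M c r 0).updateRow (Fin.last n)
        ((brd M c r 0) (Fin.last n) + Pi.single (Fin.last n) 1) := by
      ext i j
      induction i using Fin.lastCases with
      | last =>
        rw [Matrix.updateRow_self]
        induction j using Fin.lastCases with
        | last => simp
        | cast j' => simp [Pi.single_eq_of_ne (Fin.castSucc_lt_last j').ne]
      | cast i' =>
        rw [Matrix.updateRow_ne (Fin.castSucc_lt_last i').ne]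
        induction j using Fin.lastCases with
        | last => simp
        | cast j' => simp
    rw [h1, Matrix.det_updateRow_add, Matrix.updateRow_eq_self]
    congr 1
    have h2 : (brd M c r 0).updateRow (Fin.last n) (Pi.single (Fin.last n) 1)
        = brd M c (0 : Fin n → ℂ) 1 := by
      ext i j
      induction i using Fin.lastCases with
      | last =>
        rw [Matrix.updateRow_self]
        induction j using Fin.lastCases with
        | last => simp
        | cast j' => simp [Pi.single_eq_of_ne (Fin.castSucc_lt_last j').ne]
      | cast i' =>
        rw [Matrix.updateRow_ne (Fin.castSucc_lt_last i').ne]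
        induction j using Fin.lastCases with
        | last => simp
        | cast j' => simp
    rw [h2, det_brd_unit]
  -- step gamma : det (brd M c r 0) = det (brd A c r 0)
  have hc : (brd M c r 0).det = (brd A c r 0).det := by
    apply det_eq_of_forall_col_eq_smul_add_const cc (Fin.last n) hcclast
    intro i j
    induction i using Fin.lastCases with
    | last =>
      induction j using Fin.lastCases with
      | last => simp [hcclast]
      | cast j' => simp [hcccast]
    | cast i' =>
      induction j using Fin.lastCases with
      | last => simp [hcclast]
      | cast j' => simp [hcccast, hM, mul_comm]
  have := ha.symm.trans hb
  rw [det_brd_unit] at this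
  rw [hc] at this
  linear_combination -this

/-- Bordered determinant expansion. -/
lemma det_brd_expand {n : ℕ} (A : Matrix (Fin (n+1)) (Fin (n+1)) ℂ) (c r : Fin (n+1) → ℂ) :
    (brd A c r 0).det
      = -∑ j : Fin (n+1), ∑ k : Fin (n+1), (-1) ^ ((j : ℕ) + (k : ℕ)) * c j * r k
          * (A.submatrix j.succAbove k.succAbove).det := by
  rw [Matrix.det_succ_row _ (Fin.last (n+1)), Fin.sum_univ_castSucc]
  rw [brd_ll, mul_zero, zero_mul, add_zero]
  have hcomm : (∑ j : Fin (n+1), ∑ k : Fin (n+1), (-1 : ℂ) ^ ((j : ℕ) + (k : ℕ)) * c j * r k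
          * (A.submatrix j.succAbove k.succAbove).det)
      = ∑ k : Fin (n+1), ∑ j : Fin (n+1), (-1 : ℂ) ^ ((j : ℕ) + (k : ℕ)) * c j * r k
          * (A.submatrix j.succAbove k.succAbove).det := Finset.sum_comm
  rw [hcomm, ← Finset.sum_neg_distrib]
  apply Finset.sum_congr rfl
  intro k _
  -- expand the inner determinant along its last column
  have hcol : ∀ i : Fin (n+1),
      ((brd A c r 0).submatrix (Fin.last (n+1)).succAbove k.castSucc.succAbove) i (Fin.last n)
        = c i := by
    intro i
    have h1 : (k.castSucc).succAbove (Fin.last n) = Fin.last (n+1) := by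
      rw [Fin.succAbove_castSucc_of_le k (Fin.last n) (Fin.le_last k), Fin.succ_last]
    simp only [Matrix.submatrix_apply, Fin.succAbove_last, h1, brd_cl]
  have hexp := Matrix.det_succ_column
    ((brd A c r 0).submatrix (Fin.last (n+1)).succAbove k.castSucc.succAbove) (Fin.last n)
  rw [hexp]
  rw [brd_lc, Finset.mul_sum]
  rw [← Finset.sum_neg_distrib]
  apply Finset.sum_congr rfl
  intro j _
  rw [hcol j]
  have hsub : ((brd A c r 0).submatrix (Fin.last (n+1)).succAbove k.castSucc.succAbove).submatrix
      j.succAbove (Fin.last n).succAbove = A.submatrix j.succAbove k.succAbove := by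
    ext p q
    simp only [Matrix.submatrix_apply, Fin.succAbove_last, Fin.castSucc_succAbove_castSucc,
      brd_cc]
  rw [hsub]
  have hsgn : ((-1 : ℂ)) ^ ((Fin.last (n+1) : ℕ) + (k.castSucc : ℕ))
      * ((-1 : ℂ)) ^ ((j : ℕ) + (Fin.last n : ℕ))
      = -(-1 : ℂ) ^ ((j : ℕ) + (k : ℕ)) := by
    simp only [Fin.val_last, Fin.coe_castSucc]
    rw [← pow_add]
    have h2 : (n + 1 + (k : ℕ) + ((j : ℕ) + n)) = 2 * n + 1 + ((j : ℕ) + (k : ℕ)) := by ring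
    rw [h2, pow_add, pow_add]
    simp [pow_mul]
  ring_nf
  ring_nf at hsgn
  linear_combination ((A.submatrix j.succAbove k.succAbove).det * c j * r k) * hsgn

lemma mem_SA {N m : ℕ} {a : Fin N → Fin m} :
    a ∈ SA N m ↔ ∀ j k : Fin N, j < k → a k < a j := by
  simp [SA]

lemma Tsum_zero (β : ℂ) (N : ℕ) (z w : Fin (N+1) → ℂ) : Tsum β (N+1) 0 z w = 0 := by
  have : IsEmpty (Fin (N+1) → Fin 0) := by
    refine ⟨fun f => (f 0).elim0⟩
  rw [Tsum, SA]
  simp [Finset.univ_eq_empty]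

lemma Cmat_zero_det (β : ℂ) (N : ℕ) (z w : Fin (N+1) → ℂ)
    (hzw : ∀ j k, z j ≠ w k) : (Cmat β (N+1) 0 z w).det = 0 := by
  set P : Matrix (Fin (N+1)) (Fin (N+1)) ℂ :=
    Matrix.of fun j i => if (i : ℕ) < N then -β * (1 + β * z j) ^ (i : ℕ) else 0 with hP
  set Q : Matrix (Fin (N+1)) (Fin (N+1)) ℂ :=
    Matrix.of fun i k => if (i : ℕ) < N then (1 + β * w k) ^ (N - 1 - (i : ℕ)) else 0 with hQ
  have hfact : Cmat β (N+1) 0 z w = P * Q := by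
    ext j k
    rw [Matrix.mul_apply]
    have h1 : ∀ i : Fin (N+1), P j i * Q i k
        = if (i : ℕ) < N then -β * ((1 + β * z j) ^ (i : ℕ)
            * (1 + β * w k) ^ (N - 1 - (i : ℕ))) else 0 := by
      intro i
      by_cases h : (i : ℕ) < N <;> simp [hP, hQ, h, mul_assoc]
    rw [Finset.sum_congr rfl (fun i _ => h1 i)]
    rw [Fin.sum_univ_eq_sum_range
      (fun i => if i < N then -β * ((1 + β * z j) ^ i * (1 + β * w k) ^ (N - 1 - i)) else 0)]
    rw [Finset.sum_range_succ, if_neg (lt_irrefl N), add_zero]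
    rw [Finset.sum_congr rfl (fun i hi => if_pos (Finset.mem_range.mp hi))]
    have h2 : ∀ i ∈ Finset.range N,
        -β * ((1 + β * z j) ^ i * (1 + β * w k) ^ (N - 1 - i))
          = -β * ((1 + β * z j) ^ i * (1 + β * w k) ^ (N - 1 - i)) := fun _ _ => rfl
    rw [← Finset.mul_sum]
    have hne : z j - w k ≠ 0 := sub_ne_zero.mpr (hzw j k)
    rw [Cmat]
    simp only [Matrix.of_apply, Nat.add_sub_cancel, pow_zero, one_mul]
    rw [div_eq_iff hne]
    linear_combination geom_sum₂_mul (1 + β * z j) (1 + β * w k) N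
  rw [hfact, Matrix.det_mul]
  have hPdet : P.det = 0 := by
    apply Matrix.det_eq_zero_of_column_eq_zero (Fin.last N)
    intro i
    simp [hP]
  rw [hPdet, zero_mul]

lemma Cmat_succ (β : ℂ) (N m : ℕ) (z w : Fin (N+1) → ℂ) (hzw : ∀ j k, z j ≠ w k)
    (j k : Fin (N+1)) :
    Cmat β (N+1) (m+1) z w j k
      = z j * Cmat β (N+1) m z w j k + (1 + β * z j) ^ N * w k ^ m := by
  have hne : z j - w k ≠ 0 := sub_ne_zero.mpr (hzw j k)
  rw [Cmat, Cmat]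
  simp only [Matrix.of_apply, Nat.add_sub_cancel]
  field_simp
  ring

/-- the key kernel factorization identity (requires `N ≥ 1`). -/
lemma Cmat_entry (β : ℂ) (N m : ℕ) (z w : Fin (N+2) → ℂ) (hzw : ∀ j k, z j ≠ w k)
    (j k : Fin (N+2)) :
    Cmat β (N+2) m z w j k
      = (1 + β * w k) * ((z j ^ m * (1 + β * w k) ^ N - w k ^ m * (1 + β * z j) ^ N)
          / (z j - w k))
        - β * (1 + β * z j) ^ N * w k ^ m := by
  have hne : z j - w k ≠ 0 := sub_ne_zero.mpr (hzw j k)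
  rw [Cmat]
  simp only [Matrix.of_apply, Nat.add_sub_cancel, show N + 2 - 1 = N + 1 from rfl]
  field_simp
  ring

lemma Dmat_shift (β : ℂ) (s m : ℕ) (b : Fin s → Fin m) (z : Fin s → ℂ) :
    (Dmat β s (m+1) (fun k => (b k).succ) z).det = (∏ j, z j) * (Dmat β s m b z).det := by
  rw [← Matrix.det_mul_column z]
  congr 1
  ext j k
  simp only [Dmat, Matrix.of_apply, Fin.val_succ, pow_succ]
  ring

lemma Emat_shift (β : ℂ) (s m : ℕ) (b : Fin s → Fin m) (w : Fin s → ℂ) :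
    Emat β s (m+1) (fun k => (b k).succ) w = Emat β s m b w := by
  have he : ∀ k : Fin s, m + 1 - 1 - ((b k : ℕ) + 1) = m - 1 - (b k : ℕ) := fun k => by omega
  ext j k
  simp only [Emat, Matrix.of_apply, Fin.val_succ, he]

/-- extension of a tuple by a `0` in the last slot. -/
def ext0 {N m : ℕ} (b : Fin (N+1) → Fin m) : Fin (N+2) → Fin (m+1) :=
  fun k => Fin.lastCases 0 (fun k' => (b k').succ) k

@[simp] lemma ext0_last {N m : ℕ} (b : Fin (N+1) → Fin m) :
    ext0 b (Fin.last (N+1)) = 0 := by simp [ext0]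

@[simp] lemma ext0_cast {N m : ℕ} (b : Fin (N+1) → Fin m) (k : Fin (N+1)) :
    ext0 b k.castSucc = (b k).succ := by simp [ext0]

lemma Dmat_ext_det (β : ℂ) (N m : ℕ) (b : Fin (N+1) → Fin m) (z : Fin (N+2) → ℂ) :
    (Dmat β (N+2) (m+1) (ext0 b) z).det
      = ∑ j : Fin (N+2), (-1 : ℂ) ^ ((j : ℕ) + (N+1)) * (1 + β * z j) ^ (N+1)
          * ((∏ p, z (j.succAbove p)) * (Dmat β (N+1) m b (z ∘ j.succAbove)).det) := by
  rw [Matrix.det_succ_column _ (Fin.last (N+1))]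
  apply Finset.sum_congr rfl
  intro j _
  have h1 : Dmat β (N+2) (m+1) (ext0 b) z j (Fin.last (N+1)) = (1 + β * z j) ^ (N+1) := by
    simp [Dmat]
  have h2 : (Dmat β (N+2) (m+1) (ext0 b) z).submatrix j.succAbove (Fin.last (N+1)).succAbove
      = Matrix.of fun p q => z (j.succAbove p) * (Dmat β (N+1) m b (z ∘ j.succAbove)) p q := by
    ext p q
    simp only [Matrix.submatrix_apply, Fin.succAbove_last, Dmat, Matrix.of_apply, ext0_cast,
      Fin.val_succ, Function.comp_apply, Fin.coe_castSucc]
    rw [pow_succ]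
    ring
  rw [h1, h2, Matrix.det_mul_column]
  simp only [Fin.val_last]

lemma Emat_ext_det (β : ℂ) (N m : ℕ) (b : Fin (N+1) → Fin m) (w : Fin (N+2) → ℂ) :
    (Emat β (N+2) (m+1) (ext0 b) w).det
      = ∑ k : Fin (N+2), (-1 : ℂ) ^ ((k : ℕ) + (N+1)) * w k ^ m
          * ((∏ p, (1 + β * w (k.succAbove p))) * (Emat β (N+1) m b (w ∘ k.succAbove)).det) := by
  rw [Matrix.det_succ_column _ (Fin.last (N+1))]
  apply Finset.sum_congr rfl
  intro k _
  have h1 : Emat β (N+2) (m+1) (ext0 b) w k (Fin.last (N+1)) = w k ^ m := by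
    simp [Emat]
  have h2 : (Emat β (N+2) (m+1) (ext0 b) w).submatrix k.succAbove (Fin.last (N+1)).succAbove
      = Matrix.of fun p q => (1 + β * w (k.succAbove p))
          * (Emat β (N+1) m b (w ∘ k.succAbove)) p q := by
    ext p q
    have hm : m + 1 - 1 - ((b q : ℕ) + 1) = m - 1 - (b q : ℕ) := by omega
    have hq : N + 2 - 1 - (q : ℕ) = (N + 1 - 1 - (q : ℕ)) + 1 := by
      have := q.isLt; omega
    simp only [Matrix.submatrix_apply, Fin.succAbove_last, Emat, Matrix.of_apply, ext0_cast,
      Fin.val_succ, Function.comp_apply, Fin.coe_castSucc, hm, hq]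
    rw [pow_succ]
    ring
  rw [h1, h2, Matrix.det_mul_column]
  simp only [Fin.val_last]

lemma Tsum_split (β : ℂ) (N m : ℕ) (z w : Fin (N+2) → ℂ) :
    Tsum β (N+2) (m+1) z w
      = (∏ j, z j) * Tsum β (N+2) m z w
        + ∑ j : Fin (N+2), ∑ k : Fin (N+2),
            (-1 : ℂ) ^ ((j : ℕ) + (k : ℕ)) * ((1 + β * z j) ^ (N+1) * w k ^ m)
            * ((∏ p, z (j.succAbove p)) * (∏ p, (1 + β * w (k.succAbove p)))
              * Tsum β (N+1) m (z ∘ j.succAbove) (w ∘ k.succAbove)) := by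
  rw [Tsum, ← Finset.sum_filter_add_sum_filter_not (SA (N+2) (m+1))
      (fun a => a (Fin.last (N+1)) = 0)]
  have key : ∀ a ∈ (SA (N+2) (m+1)).filter (fun a => a (Fin.last (N+1)) = 0),
      ∀ k : Fin (N+1), a k.castSucc ≠ 0 := by
    intro a ha k
    rw [Finset.mem_filter] at ha
    have h1 := (mem_SA.mp ha.1) k.castSucc (Fin.last (N+1)) (Fin.castSucc_lt_last k)
    rw [ha.2] at h1
    exact Fin.pos_iff_ne_zero.mp h1
  have key2 : ∀ a ∈ (SA (N+2) (m+1)).filter (fun a => ¬ a (Fin.last (N+1)) = 0),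
      ∀ k : Fin (N+2), a k ≠ 0 := by
    intro a ha k
    rw [Finset.mem_filter] at ha
    rcases eq_or_ne k (Fin.last (N+1)) with hk | hk
    · rw [hk]; exact ha.2
    · have h1 := (mem_SA.mp ha.1) k (Fin.last (N+1))
        (lt_of_le_of_ne (Fin.le_last k) hk)
      intro h0
      rw [h0] at h1
      exact absurd h1 (Fin.not_lt_zero _)
  -- Branch A : a last ≠ 0
  have hA : ∑ a ∈ (SA (N+2) (m+1)).filter (fun a => ¬ a (Fin.last (N+1)) = 0),
      (Dmat β (N+2) (m+1) a z).det * (Emat β (N+2) (m+1) a w).det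
      = (∏ j, z j) * Tsum β (N+2) m z w := by
    rw [Tsum, Finset.mul_sum]
    refine Finset.sum_bij' (fun a ha => fun k => (a k).pred (key2 a ha k))
      (fun b _ => fun k => (b k).succ) ?_ ?_ ?_ ?_ ?_
    · intro a ha
      rw [mem_SA]
      intro j k hjk
      have h1 := (mem_SA.mp (Finset.mem_filter.mp ha).1) j k hjk
      have hj1 := key2 a ha j
      have hk1 := key2 a ha k
      rw [Fin.lt_def] at h1 ⊢
      rw [Fin.coe_pred, Fin.coe_pred]
      have hjp : 1 ≤ (a j : ℕ) := by
        rcases Nat.eq_zero_or_pos (a j : ℕ) with h | h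
        · exact absurd (Fin.ext h : a j = 0) hj1
        · exact h
      have hkp : 1 ≤ (a k : ℕ) := by
        rcases Nat.eq_zero_or_pos (a k : ℕ) with h | h
        · exact absurd (Fin.ext h : a k = 0) hk1
        · exact h
      omega
    · intro b hb
      rw [Finset.mem_filter]
      constructor
      · rw [mem_SA]
        intro j k hjk
        have h1 := (mem_SA.mp hb) j k hjk
        rw [Fin.lt_def] at h1 ⊢
        simp only [Fin.val_succ]
        omega
      · exact Fin.succ_ne_zero _
    · intro a ha
      funext k
      exact Fin.succ_pred _ _
    · intro b hb
      funext k
      exact Fin.pred_succ _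
    · intro a ha
      have hrw : a = fun k => ((a k).pred (key2 a ha k)).succ := by
        funext k; exact (Fin.succ_pred _ _).symm
      conv_lhs => rw [hrw]
      rw [Dmat_shift, Emat_shift]
      ring
  -- Branch B : a last = 0
  have hB : ∑ a ∈ (SA (N+2) (m+1)).filter (fun a => a (Fin.last (N+1)) = 0),
      (Dmat β (N+2) (m+1) a z).det * (Emat β (N+2) (m+1) a w).det
      = ∑ b ∈ SA (N+1) m,
        (Dmat β (N+2) (m+1) (ext0 b) z).det * (Emat β (N+2) (m+1) (ext0 b) w).det := by
    refine Finset.sum_bij' (fun a ha => fun k => (a k.castSucc).pred (key a ha k))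
      (fun b _ => ext0 b) ?_ ?_ ?_ ?_ ?_
    · intro a ha
      rw [mem_SA]
      intro j k hjk
      have h1 := (mem_SA.mp (Finset.mem_filter.mp ha).1) j.castSucc k.castSucc
        (by rwa [Fin.castSucc_lt_castSucc_iff])
      have hj1 := key a ha j
      have hk1 := key a ha k
      rw [Fin.lt_def] at h1 ⊢
      rw [Fin.coe_pred, Fin.coe_pred]
      have hkp : 1 ≤ (a k.castSucc : ℕ) := by
        rcases Nat.eq_zero_or_pos (a k.castSucc : ℕ) with h | h
        · exact absurd (Fin.ext h : a k.castSucc = 0) hk1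
        · exact h
      omega
    · intro b hb
      beta_reduce
      rw [Finset.mem_filter]
      refine ⟨?_, ext0_last b⟩
      rw [mem_SA]
      intro j k hjk
      induction k using Fin.lastCases with
      | last =>
        rw [ext0_last]
        induction j using Fin.lastCases with
        | last => exact absurd hjk (lt_irrefl _)
        | cast j' =>
          rw [ext0_cast]
          exact Fin.pos_iff_ne_zero.mpr (Fin.succ_ne_zero _)
      | cast k' =>
        induction j using Fin.lastCases with
        | last => exact absurd (lt_trans hjk (Fin.castSucc_lt_last k')) (lt_irrefl _)
        | cast j' =>
          rw [ext0_cast, ext0_cast]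
          have h1 := (mem_SA.mp hb) j' k' (by rwa [← Fin.castSucc_lt_castSucc_iff])
          rw [Fin.lt_def] at h1 ⊢
          simp only [Fin.val_succ]
          omega
    · intro a ha
      beta_reduce
      funext k
      induction k using Fin.lastCases with
      | last => rw [ext0_last, (Finset.mem_filter.mp ha).2]
      | cast k' => rw [ext0_cast, Fin.succ_pred]
    · intro b hb
      beta_reduce
      funext k
      have h5 : ext0 b k.castSucc = (b k).succ := ext0_cast b k
      simp only [h5]
      exact Fin.pred_succ _
    · intro a ha
      have hrw : a = ext0 (fun k => (a k.castSucc).pred (key a ha k)) := by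
        funext k
        induction k using Fin.lastCases with
        | last => rw [ext0_last, (Finset.mem_filter.mp ha).2]
        | cast k' => rw [ext0_cast, Fin.succ_pred]
      conv_lhs => rw [hrw]
  rw [hA, hB]
  have hB2 : ∑ b ∈ SA (N+1) m,
      (Dmat β (N+2) (m+1) (ext0 b) z).det * (Emat β (N+2) (m+1) (ext0 b) w).det
      = ∑ j : Fin (N+2), ∑ k : Fin (N+2),
          (-1 : ℂ) ^ ((j : ℕ) + (k : ℕ)) * ((1 + β * z j) ^ (N+1) * w k ^ m)
          * ((∏ p, z (j.succAbove p)) * (∏ p, (1 + β * w (k.succAbove p)))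
            * Tsum β (N+1) m (z ∘ j.succAbove) (w ∘ k.succAbove)) := by
    have step1 : ∀ b, (Dmat β (N+2) (m+1) (ext0 b) z).det
        * (Emat β (N+2) (m+1) (ext0 b) w).det
        = ∑ j : Fin (N+2), ∑ k : Fin (N+2),
            (-1 : ℂ) ^ ((j : ℕ) + (k : ℕ)) * ((1 + β * z j) ^ (N+1) * w k ^ m)
            * ((∏ p, z (j.succAbove p)) * (∏ p, (1 + β * w (k.succAbove p)))
              * ((Dmat β (N+1) m b (z ∘ j.succAbove)).det
                * (Emat β (N+1) m b (w ∘ k.succAbove)).det)) := by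
      intro b
      rw [Dmat_ext_det, Emat_ext_det, Fintype.sum_mul_sum]
      apply Finset.sum_congr rfl; intro j _
      apply Finset.sum_congr rfl; intro k _
      have hsgn : ((-1 : ℂ)) ^ ((j : ℕ) + (N+1)) * ((-1 : ℂ)) ^ ((k : ℕ) + (N+1))
          = (-1 : ℂ) ^ ((j : ℕ) + (k : ℕ)) := by
        rw [← pow_add]
        have h2 : ((j : ℕ) + (N+1)) + ((k : ℕ) + (N+1)) = ((j:ℕ) + (k:ℕ)) + 2 * (N+1) := by
          ring
        rw [h2, pow_add, pow_mul]
        simp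
      calc ((-1 : ℂ) ^ ((j : ℕ) + (N+1)) * (1 + β * z j) ^ (N+1)
            * ((∏ p, z (j.succAbove p)) * (Dmat β (N+1) m b (z ∘ j.succAbove)).det))
          * ((-1 : ℂ) ^ ((k : ℕ) + (N+1)) * w k ^ m
            * ((∏ p, (1 + β * w (k.succAbove p))) * (Emat β (N+1) m b (w ∘ k.succAbove)).det))
          = ((-1 : ℂ) ^ ((j : ℕ) + (N+1)) * ((-1 : ℂ)) ^ ((k : ℕ) + (N+1)))
            * ((1 + β * z j) ^ (N+1) * w k ^ m)
            * ((∏ p, z (j.succAbove p)) * (∏ p, (1 + β * w (k.succAbove p)))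
              * ((Dmat β (N+1) m b (z ∘ j.succAbove)).det
                * (Emat β (N+1) m b (w ∘ k.succAbove)).det)) := by ring
        _ = _ := by rw [hsgn]
    rw [Finset.sum_congr rfl (fun b _ => step1 b)]
    rw [Finset.sum_comm]
    apply Finset.sum_congr rfl; intro j _
    rw [Finset.sum_comm]
    apply Finset.sum_congr rfl; intro k _
    rw [Tsum, ← Finset.mul_sum]
    congr 1
    rw [← Finset.mul_sum]
  rw [hB2]
  ring

lemma det_split (β : ℂ) (N m : ℕ) (z w : Fin (N+2) → ℂ) (hzw : ∀ j k, z j ≠ w k) :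
    (Cmat β (N+2) (m+1) z w).det
      = (∏ j, z j) * (Cmat β (N+2) m z w).det
        + ∑ j : Fin (N+2), ∑ k : Fin (N+2),
            (-1 : ℂ) ^ ((j : ℕ) + (k : ℕ)) * ((1 + β * z j) ^ (N+1) * w k ^ m)
            * ((∏ p, z (j.succAbove p)) * (∏ p, (1 + β * w (k.succAbove p)))
              * (Cmat β (N+1) m (z ∘ j.succAbove) (w ∘ k.succAbove)).det) := by
  set A : Matrix (Fin (N+2)) (Fin (N+2)) ℂ :=
    Matrix.of fun j k => z j * Cmat β (N+2) m z w j k with hA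
  set c : Fin (N+2) → ℂ := fun j => (1 + β * z j) ^ (N+1) with hc
  set r : Fin (N+2) → ℂ := fun k => w k ^ m with hr
  have h1 : Cmat β (N+2) (m+1) z w = Matrix.of fun j k => A j k + c j * r k := by
    ext j k
    rw [Cmat_succ β (N+1) m z w hzw j k]
    simp [hA, hc, hr]
  rw [h1, det_add_col_mul_row]
  have h2 : A.det = (∏ j, z j) * (Cmat β (N+2) m z w).det := Matrix.det_mul_column z _
  set A2 : Matrix (Fin (N+2)) (Fin (N+2)) ℂ :=
    Matrix.of fun j k => z j * ((1 + β * w k)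
      * ((z j ^ m * (1 + β * w k) ^ N - w k ^ m * (1 + β * z j) ^ N) / (z j - w k))) with hA2
  have h3 : (brd A c r 0).det = (brd A2 c r 0).det := by
    apply Matrix.det_eq_of_forall_row_eq_smul_add_const
      (c := fun i : Fin (N+3) => Fin.lastCases 0
        (fun i' => -(β * z i' * (1 + β * z i') ^ N)) i)
      (k := Fin.last (N+2)) (by simp)
    intro i j
    induction i using Fin.lastCases with
    | last =>
      simp only [Fin.lastCases_last]
      induction j using Fin.lastCases with
      | last => simp
      | cast j' => simp
    | cast i' =>
      simp only [Fin.lastCases_castSucc]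
      induction j using Fin.lastCases with
      | last =>
        rw [brd_cl, brd_cl, brd_ll]
        ring
      | cast j' =>
        rw [brd_cc, brd_cc, brd_lc]
        rw [hA, hA2, hr]
        simp only [Matrix.of_apply]
        rw [Cmat_entry β N m z w hzw i' j']
        ring
  rw [h2, h3, det_brd_expand]
  have h4 : ∀ j k : Fin (N+2),
      (A2.submatrix j.succAbove k.succAbove).det
        = (∏ p, z (j.succAbove p)) * (∏ p, (1 + β * w (k.succAbove p)))
          * (Cmat β (N+1) m (z ∘ j.succAbove) (w ∘ k.succAbove)).det := by
    intro j k
    have e1 : A2.submatrix j.succAbove k.succAbove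
        = Matrix.of fun p q => z (j.succAbove p)
            * (Matrix.of fun p q => (1 + β * w (k.succAbove q))
              * (Cmat β (N+1) m (z ∘ j.succAbove) (w ∘ k.succAbove)) p q) p q := by
      ext p q
      simp only [Matrix.submatrix_apply, hA2, Matrix.of_apply, Cmat, Function.comp_apply,
        Nat.add_sub_cancel]
    rw [e1, Matrix.det_mul_column, Matrix.det_mul_row]
    ring
  rw [Finset.sum_congr rfl (fun j _ => Finset.sum_congr rfl (fun k _ => by rw [h4 j k]))]
  rw [sub_neg_eq_add]
  congr 1
  apply Finset.sum_congr rfl; intro j _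
  apply Finset.sum_congr rfl; intro k _
  simp only [hc, hr]
  ring

/-- The main identity. -/
lemma main (β : ℂ) : ∀ N m : ℕ, ∀ z w : Fin N → ℂ, (∀ j k, z j ≠ w k) →
    Tsum β N m z w = (Cmat β N m z w).det := by
  intro N
  induction N with
  | zero =>
    intro m z w hzw
    rw [Tsum]
    have h1 : SA 0 m = Finset.univ := by
      apply Finset.filter_true_of_mem
      intro a _ j k hjk
      exact j.elim0
    rw [h1, Finset.univ_unique, Finset.sum_singleton]
    simp [Matrix.det_fin_zero]
  | succ N ihN =>
    cases N with
    | zero =>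
      intro m z w hzw
      rw [Tsum]
      have h1 : SA 1 m = Finset.univ := by
        apply Finset.filter_true_of_mem
        intro a _ j k hjk
        exact absurd (Subsingleton.elim j k) (ne_of_lt hjk)
      rw [h1]
      have h2 : ∑ a : Fin 1 → Fin m, (Dmat β 1 m a z).det * (Emat β 1 m a w).det
          = ∑ i : Fin m, z 0 ^ (i : ℕ) * w 0 ^ (m - 1 - (i : ℕ)) := by
        apply Fintype.sum_equiv (Equiv.funUnique (Fin 1) (Fin m))
        intro a
        have ha : a = fun _ => a 0 := by
          funext x
          exact congrArg a (Subsingleton.elim x 0)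
        rw [Matrix.det_fin_one, Matrix.det_fin_one]
        simp [Dmat, Emat, Equiv.funUnique]
      rw [h2]
      have h3 : (Cmat β 1 m z w).det = (z 0 ^ m - w 0 ^ m) / (z 0 - w 0) := by
        rw [Matrix.det_fin_one]
        simp [Cmat]
      rw [h3]
      rw [Fin.sum_univ_eq_sum_range (fun i => z 0 ^ i * w 0 ^ (m - 1 - i))]
      rw [eq_div_iff (sub_ne_zero.mpr (hzw 0 0))]
      exact geom_sum₂_mul (z 0) (w 0) m
    | succ N' =>
      intro m
      induction m with
      | zero =>
        intro z w hzw
        rw [Tsum_zero, Cmat_zero_det β _ z w hzw]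
      | succ m ihm =>
        intro z w hzw
        rw [Tsum_split, det_split β N' m z w hzw]
        rw [ihm z w hzw]
        congr 1
        apply Finset.sum_congr rfl; intro j _
        apply Finset.sum_congr rfl; intro k _
        rw [ihN m (z ∘ j.succAbove) (w ∘ k.succAbove)
          (fun p q => hzw (j.succAbove p) (k.succAbove q))]

lemma chain_le {N m : ℕ} {a : Fin N → Fin m} (ha : ∀ j k : Fin N, j < k → a k < a j) :
    ∀ j k : Fin N, j ≤ k → (a k : ℕ) + ((k : ℕ) - (j : ℕ)) ≤ (a j : ℕ) := by
  suffices h : ∀ d : ℕ, ∀ j k : Fin N, (j : ℕ) + d = (k : ℕ) → (a k : ℕ) + d ≤ (a j : ℕ) by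
    intro j k hjk
    have h2 := h ((k : ℕ) - (j : ℕ)) j k (by
      rw [Fin.le_def] at hjk; omega)
    omega
  intro d
  induction d with
  | zero =>
    intro j k h0
    have : j = k := Fin.ext (by omega)
    subst this; omega
  | succ d ih =>
    intro j k hd
    have hjN : (j : ℕ) + 1 < N := by have := k.isLt; omega
    have h1 : a ⟨(j : ℕ) + 1, hjN⟩ < a j := ha j ⟨(j : ℕ) + 1, hjN⟩ (by
      rw [Fin.lt_def]; exact Nat.lt_succ_self _)
    have h2 := ih ⟨(j : ℕ) + 1, hjN⟩ k (by
      show (j : ℕ) + 1 + d = (k : ℕ); omega)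
    rw [Fin.lt_def] at h1
    omega

end CauchyAux

/-- The Grothendieck polynomial of the Grassmannian variety,
`G_λ(z;β) = det( z_j^{λ_k+N−k} (1+βz_j)^{k−1} ) / ∏_{j<k} (z_j − z_k)`. -/
def Groth (N : ℕ) (β : ℂ) (lam : Fin N → ℕ) (z : Fin N → ℂ) : ℂ :=
  Matrix.det (Matrix.of fun j k : Fin N =>
      z j ^ (lam k + (N - 1 - (k : ℕ))) * (1 + β * z j) ^ (k : ℕ))
    / ∏ j : Fin N, ∏ k : Fin N, if j < k then z j - z k else 1

open CauchyAux

/-- The Cauchy identity for Grothendieck polynomials. Partitions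
`λ ⊆ L^N` are encoded as weakly decreasing functions `Fin N → Fin (L+1)`, and
`λ∨_j = L − λ_{N+1−j}`. -/
theorem grothendieck_cauchy_identity (β : ℂ) (N : ℕ) (hN : 1 ≤ N) (L : ℕ)
    (z w : Fin N → ℂ)
    (hz : ∀ j k, j ≠ k → z j ≠ z k) (hw : ∀ j k, j ≠ k → w j ≠ w k)
    (hzw : ∀ j k, z j ≠ w k) :
    ∑ f ∈ Finset.univ.filter
        (fun f : Fin N → Fin (L + 1) => ∀ j k : Fin N, j ≤ k → f k ≤ f j),
      Groth N β (fun j => (f j : ℕ)) z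
        * Groth N β (fun j => L - (f (Fin.rev j) : ℕ)) w
      = (∏ j, ∏ k, if j < k then ((z j - z k) * (w k - w j))⁻¹ else 1)
        * Matrix.det (Matrix.of fun j k : Fin N =>
            ((z j) ^ (L + N) * (1 + β * w k) ^ (N - 1)
              - (w k) ^ (L + N) * (1 + β * z j) ^ (N - 1)) / (z j - w k)) := by
  classical
  -- abbreviations
  set m := L + N with hm
  set Vz : ℂ := ∏ j : Fin N, ∏ k : Fin N, if j < k then z j - z k else 1 with hVz
  set Vw : ℂ := ∏ j : Fin N, ∏ k : Fin N, if j < k then w j - w k else 1 with hVw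
  set Vw' : ℂ := ∏ j : Fin N, ∏ k : Fin N, if j < k then w k - w j else 1 with hVw'
  have hVzne : Vz ≠ 0 := by
    rw [hVz]
    refine Finset.prod_ne_zero_iff.mpr fun j _ => Finset.prod_ne_zero_iff.mpr fun k _ => ?_
    split_ifs with h
    · exact sub_ne_zero.mpr (hz j k (ne_of_lt h))
    · exact one_ne_zero
  have hVwne : Vw ≠ 0 := by
    rw [hVw]
    refine Finset.prod_ne_zero_iff.mpr fun j _ => Finset.prod_ne_zero_iff.mpr fun k _ => ?_
    split_ifs with h
    · exact sub_ne_zero.mpr (hw j k (ne_of_lt h))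
    · exact one_ne_zero
  have hVw'ne : Vw' ≠ 0 := by
    rw [hVw']
    refine Finset.prod_ne_zero_iff.mpr fun j _ => Finset.prod_ne_zero_iff.mpr fun k _ => ?_
    split_ifs with h
    · exact sub_ne_zero.mpr (hw k j (ne_of_lt h).symm)
    · exact one_ne_zero
  -- the sign of the reversal permutation
  set εp : ℂ := ((Equiv.Perm.sign (Fin.revPerm : Equiv.Perm (Fin N)) : ℤ) : ℂ) with hεp
  have hεp2 : εp * εp = 1 := by
    rcases Int.units_eq_one_or (Equiv.Perm.sign (Fin.revPerm : Equiv.Perm (Fin N))) with h | h <;>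
      rw [hεp, h] <;> norm_num
  have hεpne : εp ≠ 0 := left_ne_zero_of_mul_eq_one hεp2
  -- Vandermonde comparison : Vw = εp * Vw'
  have hIoi : ∀ (v : Fin N → ℂ), (Matrix.vandermonde v).det
      = ∏ j : Fin N, ∏ k : Fin N, (if j < k then v k - v j else 1) := by
    intro v
    rw [Matrix.det_vandermonde]
    apply Finset.prod_congr rfl; intro j _
    have hIo : Finset.Ioi j = Finset.univ.filter (fun k => j < k) := by
      ext k; simp
    rw [hIo, Finset.prod_filter]
  have hvand : Vw = εp * Vw' := by
    have hpair : ∀ (F : Fin N → Fin N → ℂ),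
        (∏ j : Fin N, ∏ k : Fin N, F j k) = ∏ p : Fin N × Fin N, F p.1 p.2 := by
      intro F
      rw [← Finset.univ_product_univ, Finset.prod_product']
    have hswap : (∏ p : Fin N × Fin N, (if p.1 < p.2 then w p.1 - w p.2 else 1))
        = ∏ p : Fin N × Fin N, (if p.1 < p.2 then w (Fin.rev p.2) - w (Fin.rev p.1) else 1) := by
      apply Fintype.prod_equiv
        (⟨fun p => (p.2.rev, p.1.rev), fun p => (p.2.rev, p.1.rev),
          fun p => by simp [Fin.rev_rev], fun p => by simp [Fin.rev_rev]⟩ :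
            (Fin N × Fin N) ≃ (Fin N × Fin N))
      intro p
      simp only [Equiv.coe_fn_mk, Fin.rev_rev, Fin.rev_lt_rev]
    have h3 : Matrix.vandermonde (w ∘ Fin.rev)
        = (Matrix.vandermonde w).submatrix Fin.revPerm id := by
      ext i j
      simp [Matrix.vandermonde_apply]
    have h4 : Vw = (Matrix.vandermonde (w ∘ Fin.rev)).det := by
      rw [hIoi (w ∘ Fin.rev), hVw, hpair (fun j k => if j < k then w j - w k else 1),
        hpair (fun j k => if j < k then (w ∘ Fin.rev) k - (w ∘ Fin.rev) j else 1)]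
      exact hswap
    rw [h4, h3, Matrix.det_permute, hIoi w, hVw', hεp]
  -- the forward map on indices
  have hafval : ∀ (f : Fin N → Fin (L+1)) (k : Fin N), (f k : ℕ) + (N - 1 - (k : ℕ)) < m := by
    intro f k; have h1 := (f k).isLt; have h2 := k.isLt; omega
  set af : (Fin N → Fin (L+1)) → (Fin N → Fin m) :=
    fun f k => ⟨(f k : ℕ) + (N - 1 - (k : ℕ)), hafval f k⟩ with haf
  -- rewriting the dual Grothendieck determinant
  have hMw : ∀ f : Fin N → Fin (L+1),
      (Matrix.of fun j k : Fin N =>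
          w j ^ ((L - (f (Fin.rev k) : ℕ)) + (N - 1 - (k : ℕ))) * (1 + β * w j) ^ (k : ℕ)).det
        = εp * (Emat β N m (af f) w).det := by
    intro f
    set X : Matrix (Fin N) (Fin N) ℂ := Matrix.of fun j k : Fin N =>
      w j ^ ((L - (f k : ℕ)) + (k : ℕ)) * (1 + β * w j) ^ (N - 1 - (k : ℕ)) with hX
    have h1 : (Matrix.of fun j k : Fin N =>
        w j ^ ((L - (f (Fin.rev k) : ℕ)) + (N - 1 - (k : ℕ))) * (1 + β * w j) ^ (k : ℕ))
        = X.submatrix id Fin.revPerm := by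
      ext j k
      have hk := k.isLt
      have h2 : ((Fin.rev k : ℕ)) = N - 1 - (k : ℕ) := by
        rw [Fin.val_rev]; omega
      have h3 : N - 1 - (N - 1 - (k : ℕ)) = (k : ℕ) := by omega
      simp only [Matrix.submatrix_apply, id_eq, Fin.revPerm_apply, hX, Matrix.of_apply, h2, h3]
    have h4 : X = Emat β N m (af f) w := by
      ext j k
      have hk := k.isLt
      have hf := (f k).isLt
      have h5 : m - 1 - ((af f k : ℕ)) = (L - (f k : ℕ)) + (k : ℕ) := by
        show m - 1 - ((f k : ℕ) + (N - 1 - (k : ℕ))) = _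
        omega
      rw [Emat, hX]
      simp only [Matrix.of_apply, h5]
    rw [h1, Matrix.det_permute', h4, hεp]
  -- per-term rewriting
  have hper : ∀ f ∈ Finset.univ.filter
      (fun f : Fin N → Fin (L + 1) => ∀ j k : Fin N, j ≤ k → f k ≤ f j),
      Groth N β (fun j => (f j : ℕ)) z * Groth N β (fun j => L - (f (Fin.rev j) : ℕ)) w
        = εp / (Vz * Vw) * ((Dmat β N m (af f) z).det * (Emat β N m (af f) w).det) := by
    intro f _
    rw [Groth, Groth]
    have h1 : (Matrix.of fun j k : Fin N =>
        z j ^ ((f k : ℕ) + (N - 1 - (k : ℕ))) * (1 + β * z j) ^ (k : ℕ))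
        = Dmat β N m (af f) z := rfl
    rw [h1, hMw f, ← hVz, ← hVw]
    field_simp
  rw [Finset.sum_congr rfl hper, ← Finset.mul_sum]
  -- the bijection to strictly decreasing tuples
  have hsum : ∑ f ∈ Finset.univ.filter
      (fun f : Fin N → Fin (L + 1) => ∀ j k : Fin N, j ≤ k → f k ≤ f j),
      (Dmat β N m (af f) z).det * (Emat β N m (af f) w).det = Tsum β N m z w := by
    rw [Tsum]
    have hNpos : 0 < N := hN
    refine Finset.sum_bij' (i := fun f _ => af f)
      (j := fun a ha => fun k => (⟨(a k : ℕ) - (N - 1 - (k : ℕ)), by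
        have hA := mem_SA.mp ha
        have h0 := chain_le hA ⟨0, hNpos⟩ k (by rw [Fin.le_def]; exact Nat.zero_le _)
        have h1 := (a ⟨0, hNpos⟩).isLt
        have hk := k.isLt
        simp only [Fin.val_mk] at h0 h1
        omega⟩ : Fin (L+1)))
      ?_ ?_ ?_ ?_ ?_
    · intro f hf
      rw [mem_SA]
      intro j k hjk
      have hmem := (Finset.mem_filter.mp hf).2 j k (le_of_lt hjk)
      rw [Fin.lt_def] at hjk ⊢
      rw [Fin.le_def] at hmem
      show (f k : ℕ) + (N - 1 - (k : ℕ)) < (f j : ℕ) + (N - 1 - (j : ℕ))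
      have hk := k.isLt
      omega
    · intro a ha
      rw [Finset.mem_filter]
      refine ⟨Finset.mem_univ _, ?_⟩
      intro j k hjk
      have hA := mem_SA.mp ha
      have hc := chain_le hA j k hjk
      rw [Fin.le_def] at hjk ⊢
      show (a k : ℕ) - (N - 1 - (k : ℕ)) ≤ (a j : ℕ) - (N - 1 - (j : ℕ))
      have hk := k.isLt
      have hj := j.isLt
      omega
    · intro f hf
      funext k
      apply Fin.ext
      show ((f k : ℕ) + (N - 1 - (k : ℕ))) - (N - 1 - (k : ℕ)) = (f k : ℕ)
      omega
    · intro a ha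
      funext k
      apply Fin.ext
      have hA := mem_SA.mp ha
      have hNk : N - 1 < N := by omega
      have hlow := chain_le hA k ⟨N - 1, hNk⟩ (by
        rw [Fin.le_def]
        simp only [Fin.val_mk]
        have := k.isLt
        omega)
      simp only [Fin.val_mk] at hlow
      show ((a k : ℕ) - (N - 1 - (k : ℕ))) + (N - 1 - (k : ℕ)) = (a k : ℕ)
      have hk := k.isLt
      omega
    · intro f hf
      rfl
  rw [hsum, CauchyAux.main β N m z w hzw]
  -- the right-hand side product
  have hC : (Matrix.of fun j k : Fin N =>
      ((z j) ^ (L + N) * (1 + β * w k) ^ (N - 1)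
        - (w k) ^ (L + N) * (1 + β * z j) ^ (N - 1)) / (z j - w k)) = Cmat β N m z w := rfl
  rw [hC]
  have hVinv : (∏ j : Fin N, ∏ k : Fin N, if j < k then ((z j - z k) * (w k - w j))⁻¹ else 1)
      = (Vz * Vw')⁻¹ := by
    rw [hVz, hVw', ← Finset.prod_mul_distrib, ← Finset.prod_inv_distrib]
    apply Finset.prod_congr rfl; intro j _
    rw [← Finset.prod_mul_distrib, ← Finset.prod_inv_distrib]
    apply Finset.prod_congr rfl; intro k _
    split_ifs with h
    · rfl
    · simp
  rw [hVinv]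
  -- final algebra
  have hne : Vz * Vw' ≠ 0 := mul_ne_zero hVzne hVw'ne
  rw [hvand]
  rw [div_mul_eq_mul_div, div_eq_iff (by
    exact mul_ne_zero hVzne (mul_ne_zero hεpne hVw'ne))]
  have h9 : (Vz * Vw')⁻¹ * (Cmat β N m z w).det * (Vz * (εp * Vw'))
      = εp * (Cmat β N m z w).det * ((Vz * Vw')⁻¹ * (Vz * Vw')) := by ring
  rw [h9, inv_mul_cancel₀ hne, mul_one]
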